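/- For each s > 0 there exists F ∈ ℬ_c(ℝ) such that limsup_{h→0⁺} |Ω_F(s+h) − Ω_F(s)| / (h·|log h|^{1/2}) = ∞. In particular, there exists F ∈ ℬ_c(ℝ) such that Ω_F is not Lipschitz continuous. -/

import Mathlib

open MeasureTheory Filter Topology

noncomputable def v (s t : ℝ) : ℂ :=
  if t = 0 then (s:ℂ)^2/2
  else (1 - Complex.I*(s:ℂ)*(t:ℂ) - Complex.exp (-Complex.I*(s:ℂ)*(t:ℂ)))/(t:ℂ)^2

noncomputable def vd (s t : ℝ) : ℂ :=
  if t = 0 then 0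
  else (Complex.I*(s:ℂ)*Complex.exp (-Complex.I*(s:ℂ)*(t:ℂ)) - Complex.I*(s:ℂ))/(t:ℂ)^2
    - 2*(1 - Complex.I*(s:ℂ)*(t:ℂ) - Complex.exp (-Complex.I*(s:ℂ)*(t:ℂ)))/(t:ℂ)^3

def BcR (F : ℝ → ℂ) : Prop :=
  Continuous F ∧ Tendsto F atBot (𝓝 0) ∧ ∃ L : ℂ, Tendsto F atTop (𝓝 L)

noncomputable def Om (F : ℝ → ℂ) (s : ℝ) : ℂ := -∫ t : ℝ, F t * vd s t


open Set

noncomputable def rho (t : ℝ) : ℝ :=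
  min (max (t-3) 0) ((Real.log (max t 2)) ^ (-(1/4 : ℝ)))

lemma rho_nonneg (t : ℝ) : 0 ≤ rho t := by
  refine le_min (le_max_right _ _) (Real.rpow_nonneg ?_ _)
  exact Real.log_nonneg (le_trans one_le_two (le_max_right _ _))

lemma rho_eq_zero {t : ℝ} (ht : t ≤ 3) : rho t = 0 := by
  have h1 : max (t-3) 0 = 0 := max_eq_right (by linarith)
  rw [rho, h1, min_eq_left]
  exact Real.rpow_nonneg (Real.log_nonneg (le_trans one_le_two (le_max_right _ _))) _

lemma rho_le_rpow (t : ℝ) : rho t ≤ (Real.log (max t 2)) ^ (-(1/4 : ℝ)) :=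
  min_le_right _ _

lemma one_le_log_of_4le {t : ℝ} (ht : (4:ℝ) ≤ t) : 1 ≤ Real.log t := by
  have : Real.exp 1 ≤ t := le_trans (by
    have := Real.exp_one_lt_d9; linarith) ht
  calc (1:ℝ) = Real.log (Real.exp 1) := by rw [Real.log_exp]
  _ ≤ Real.log t := Real.log_le_log (Real.exp_pos 1) this

lemma rho_le_one (t : ℝ) : rho t ≤ 1 := by
  rcases le_total t 4 with h | h
  · exact le_trans (min_le_left _ _) (by simp; linarith)
  · refine le_trans (rho_le_rpow t) ?_
    rw [max_eq_left (by linarith)]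
    calc (Real.log t) ^ (-(1/4:ℝ)) ≤ (1:ℝ) ^ (-(1/4:ℝ)) := by
          apply Real.rpow_le_rpow_of_nonpos one_pos (one_le_log_of_4le h) (by norm_num)
    _ = 1 := Real.one_rpow _

lemma rho_eq_of_4le {t : ℝ} (ht : (4:ℝ) ≤ t) : rho t = (Real.log t) ^ (-(1/4 : ℝ)) := by
  rw [rho, max_eq_left (by linarith : (2:ℝ) ≤ t), min_eq_right]
  rw [max_eq_left (by linarith)]
  calc (Real.log t) ^ (-(1/4:ℝ)) ≤ (1:ℝ) ^ (-(1/4:ℝ)) :=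
        Real.rpow_le_rpow_of_nonpos one_pos (one_le_log_of_4le ht) (by norm_num)
  _ = 1 := Real.one_rpow _
  _ ≤ t - 3 := by linarith

lemma rho_continuous : Continuous rho := by
  apply Continuous.min
  · fun_prop
  · apply Continuous.rpow_const
    · apply Continuous.log (by fun_prop)
      intro t
      have : (2:ℝ) ≤ max t 2 := le_max_right _ _
      positivity
    · intro x; left
      have : (2:ℝ) ≤ max x 2 := le_max_right _ _
      have := Real.log_pos (show (1:ℝ) < max x 2 by linarith)
      positivity


noncomputable def FF (s : ℝ) (t : ℝ) : ℂ := Complex.exp (Complex.I * s * t) * (rho t : ℂ)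

lemma norm_exp_I_mul (a : ℝ) : ‖Complex.exp (Complex.I * a)‖ = 1 := by
  rw [Complex.norm_exp]
  simp [Complex.mul_re]

lemma FF_continuous (s : ℝ) : Continuous (FF s) :=
  (Complex.continuous_exp.comp (by fun_prop)).mul (Complex.continuous_ofReal.comp rho_continuous)

lemma norm_FF_le (s t : ℝ) : ‖FF s t‖ ≤ rho t := by
  rw [FF, norm_mul]
  have : Complex.I * s * t = Complex.I * ((s*t:ℝ):ℂ) := by push_cast; ring
  rw [this, norm_exp_I_mul, one_mul, Complex.norm_real,
    Real.norm_eq_abs, abs_of_nonneg (rho_nonneg t)]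

lemma BcR_FF (s : ℝ) : BcR (FF s) := by
  refine ⟨by exact (Complex.continuous_exp.comp (by fun_prop)).mul (Complex.continuous_ofReal.comp rho_continuous), ?_, 0, ?_⟩
  · apply Tendsto.congr' (f₁ := fun _ => (0:ℂ)) _ tendsto_const_nhds
    filter_upwards [eventually_le_atBot (3:ℝ)] with t ht
    simp [FF, rho_eq_zero ht]
  · apply squeeze_zero_norm (norm_FF_le s)
    have h1 : Tendsto (fun t : ℝ => Real.log (max t 2)) atTop atTop := by
      apply Real.tendsto_log_atTop.comp
      exact tendsto_atTop_mono (fun t => le_max_left _ _) tendsto_id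
    have h2 := (tendsto_rpow_neg_atTop (by norm_num : (0:ℝ) < 1/4)).comp h1
    exact squeeze_zero rho_nonneg rho_le_rpow h2

lemma vd_eq {s t : ℝ} (ht : t ≠ 0) :
    vd s t = Complex.I*s*Complex.exp (-Complex.I*s*t)/(t:ℂ)^2 + Complex.I*s/(t:ℂ)^2
      - 2/(t:ℂ)^3 + 2*Complex.exp (-Complex.I*s*t)/(t:ℂ)^3 := by
  have ht' : (t:ℂ) ≠ 0 := by exact_mod_cast ht
  rw [vd, if_neg ht]
  field_simp
  ring

lemma norm_exp_neg_I_mul (s t : ℝ) : ‖Complex.exp (-Complex.I*s*t)‖ = 1 := by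
  rw [Complex.norm_exp]
  simp [Complex.mul_re]

lemma norm_vd_le {s t : ℝ} (hs : 0 ≤ s) (ht : 3 ≤ t) : ‖vd s t‖ ≤ (2*s+4)/t^2 := by
  have ht0 : (0:ℝ) < t := by linarith
  have ht' : t ≠ 0 := ne_of_gt ht0
  rw [vd_eq ht']
  have hnt2 : ‖(t:ℂ)^2‖ = t^2 := by
    rw [norm_pow, Complex.norm_real, Real.norm_eq_abs, abs_of_pos ht0]
  have hnt3 : ‖(t:ℂ)^3‖ = t^3 := by
    rw [norm_pow, Complex.norm_real, Real.norm_eq_abs, abs_of_pos ht0]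
  have h1 : ‖Complex.I*s*Complex.exp (-Complex.I*s*t)/(t:ℂ)^2‖ = s/t^2 := by
    rw [norm_div, norm_mul, norm_mul, norm_exp_neg_I_mul, hnt2]
    simp [abs_of_nonneg hs]
  have h2 : ‖Complex.I*(s:ℂ)/(t:ℂ)^2‖ = s/t^2 := by
    rw [norm_div, norm_mul, hnt2]; simp [abs_of_nonneg hs]
  have h3 : ‖(2:ℂ)/(t:ℂ)^3‖ = 2/t^3 := by
    rw [norm_div, hnt3]; simp
  have h4 : ‖2*Complex.exp (-Complex.I*s*t)/(t:ℂ)^3‖ = 2/t^3 := by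
    rw [norm_div, norm_mul, norm_exp_neg_I_mul, hnt3]; simp
  have ht3 : 2/t^3 ≤ 2/t^2 := by
    apply div_le_div_of_nonneg_left (by norm_num) (by positivity)
    calc t^2 = t^2 * 1 := by ring
    _ ≤ t^2 * t := by nlinarith
    _ = t^3 := by ring
  calc ‖_‖ ≤ ‖Complex.I*s*Complex.exp (-Complex.I*s*t)/(t:ℂ)^2 + Complex.I*s/(t:ℂ)^2
      - 2/(t:ℂ)^3‖ + ‖2*Complex.exp (-Complex.I*s*t)/(t:ℂ)^3‖ := norm_add_le _ _
  _ ≤ (‖Complex.I*s*Complex.exp (-Complex.I*s*t)/(t:ℂ)^2 + Complex.I*s/(t:ℂ)^2‖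
      + ‖(2:ℂ)/(t:ℂ)^3‖) + ‖2*Complex.exp (-Complex.I*s*t)/(t:ℂ)^3‖ := by
        gcongr; exact norm_sub_le _ _
  _ ≤ ((‖Complex.I*s*Complex.exp (-Complex.I*s*t)/(t:ℂ)^2‖ + ‖Complex.I*(s:ℂ)/(t:ℂ)^2‖)
      + ‖(2:ℂ)/(t:ℂ)^3‖) + ‖2*Complex.exp (-Complex.I*s*t)/(t:ℂ)^3‖ := by
        gcongr; exact norm_add_le _ _
  _ = s/t^2 + s/t^2 + 2/t^3 + 2/t^3 := by rw [h1,h2,h3,h4]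
  _ ≤ s/t^2 + s/t^2 + 2/t^2 + 2/t^2 := by gcongr
  _ = (2*s+4)/t^2 := by ring

lemma vd_measurable (s : ℝ) : Measurable (vd s) := by
  unfold vd
  apply Measurable.ite (measurableSet_eq_fun measurable_id measurable_const)
    measurable_const
  fun_prop

lemma rpow_neg_two {t : ℝ} (ht : 0 < t) : t ^ (-2:ℝ) = 1/t^2 := by
  rw [show (-2:ℝ) = -(2:ℕ) by norm_num, Real.rpow_neg ht.le, Real.rpow_natCast]
  rw [one_div]

lemma integrableOn_rpow_neg_two {c : ℝ} (hc : 0 < c) :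
    IntegrableOn (fun t : ℝ => t ^ (-2:ℝ)) (Ioi c) :=
  integrableOn_Ioi_rpow_of_lt (by norm_num) hc

lemma integral_rpow_neg_two {c : ℝ} (hc : 0 < c) :
    ∫ t in Ioi c, t ^ (-2:ℝ) = c⁻¹ := by
  rw [integral_Ioi_rpow_of_lt (by norm_num) hc]
  norm_num
  rw [Real.rpow_neg_one]

lemma integrable_of_bound {f : ℝ → ℂ} (hm : AEStronglyMeasurable f volume) (C : ℝ)
    (hb : ∀ t : ℝ, 3 < t → ‖f t‖ ≤ C * t ^ (-2:ℝ)) :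
    IntegrableOn f (Ioi 3) := by
  apply Integrable.mono' ((integrableOn_rpow_neg_two (by norm_num : (0:ℝ)<3)).const_mul C)
    (hm.restrict)
  rw [ae_restrict_iff' measurableSet_Ioi]
  exact ae_of_all _ (fun t ht => hb t ht)

lemma integrable_of_bound_re {f : ℝ → ℝ} (hm : AEStronglyMeasurable f volume) (C : ℝ)
    (hb : ∀ t : ℝ, 3 < t → ‖f t‖ ≤ C * t ^ (-2:ℝ)) :
    IntegrableOn f (Ioi 3) := by
  apply Integrable.mono' ((integrableOn_rpow_neg_two (by norm_num : (0:ℝ)<3)).const_mul C)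
    (hm.restrict)
  rw [ae_restrict_iff' measurableSet_Ioi]
  exact ae_of_all _ (fun t ht => hb t ht)

lemma im_g {h t : ℝ} (ht : 0 < t) :
    ((rho t : ℂ) * (1 - Complex.exp (-Complex.I*h*t)) / (t:ℂ)^2).im
      = rho t * Real.sin (h*t) / t^2 := by
  have e1 : Complex.exp (-Complex.I*(h:ℂ)*t) = Complex.exp (((-(h*t):ℝ):ℂ) * Complex.I) := by
    congr 1; push_cast; ring
  have e2 : ((t:ℂ))^2 = (((t^2:ℝ)):ℂ) := by push_cast; ring
  rw [e1, e2, Complex.div_ofReal_im]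
  simp only [Complex.mul_im, Complex.ofReal_re, Complex.ofReal_im, Complex.sub_im,
    Complex.sub_re, Complex.one_im, Complex.one_re, Complex.exp_ofReal_mul_I_im,
    Real.sin_neg, zero_mul, add_zero, sub_zero]
  ring

lemma norm_one_sub_exp {h t : ℝ} (hh : 0 ≤ h) (ht : 0 ≤ t) :
    ‖1 - Complex.exp (-Complex.I*h*t)‖ ≤ 2*(h*t) := by
  rw [norm_sub_rev]
  have habs : ‖(-Complex.I*h*t)‖ = h*t := by
    simp [abs_of_nonneg hh, abs_of_nonneg ht]
  rcases le_total (h*t) 1 with hle | hle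
  · have := Complex.norm_exp_sub_one_le (x := -Complex.I*h*t) (by rw [habs]; exact hle)
    calc ‖Complex.exp (-Complex.I*h*t) - 1‖ ≤ 2 * ‖(-Complex.I*h*t)‖ := this
    _ = 2*(h*t) := by rw [habs]
  · calc ‖Complex.exp (-Complex.I*h*t) - 1‖ ≤ ‖Complex.exp (-Complex.I*h*t)‖ + ‖(1:ℂ)‖ :=
        norm_sub_le _ _
    _ ≤ 2 := by
        have : ‖Complex.exp (-Complex.I*h*t)‖ = 1 := by
          rw [Complex.norm_exp]; simp [Complex.mul_re]
        rw [this]; norm_num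
    _ ≤ 2*(h*t) := by nlinarith

lemma key_identity {s h t : ℝ} (ht : t ≠ 0) :
    FF s t * (vd s t - vd (s+h) t)
      - Complex.I*s*((rho t : ℂ) * (1 - Complex.exp (-Complex.I*h*t)) / (t:ℂ)^2)
    = (rho t : ℂ) * (-(Complex.I*h)*Complex.exp (-Complex.I*h*t)/(t:ℂ)^2
        - Complex.I*h*Complex.exp (Complex.I*s*t)/(t:ℂ)^2
        + 2*(1-Complex.exp (-Complex.I*h*t))/(t:ℂ)^3) := by
  have ht' : (t:ℂ) ≠ 0 := by exact_mod_cast ht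
  rw [vd_eq ht, vd_eq ht, FF]
  have eσ : Complex.exp (-Complex.I*(↑(s+h):ℂ)*t)
      = Complex.exp (-Complex.I*s*t) * Complex.exp (-Complex.I*h*t) := by
    rw [← Complex.exp_add]; push_cast; ring_nf
  have hAB : Complex.exp (Complex.I*(s:ℂ)*t) * Complex.exp (-Complex.I*(s:ℂ)*t) = 1 := by
    have e0 : Complex.I*(s:ℂ)*t + -Complex.I*(s:ℂ)*t = 0 := by ring
    rw [← Complex.exp_add, e0, Complex.exp_zero]
  rw [eσ]
  push_cast
  linear_combination ((rho t : ℂ) * ((Complex.I*s - Complex.I*((s:ℂ)+(h:ℂ))*Complex.exp (-Complex.I*h*t))/(t:ℂ)^2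
    + 2*(1-Complex.exp (-Complex.I*h*t))/(t:ℂ)^3)) * hAB

lemma key_pointwise {s h t : ℝ} (hs : 0 ≤ s) (hh : 0 ≤ h) (ht : 3 < t) :
    ‖FF s t * (vd s t - vd (s+h) t)
      - Complex.I*s*((rho t : ℂ) * (1 - Complex.exp (-Complex.I*h*t)) / (t:ℂ)^2)‖
    ≤ (6*h) * t^(-2:ℝ) := by
  have ht0 : (0:ℝ) < t := by linarith
  rw [key_identity (ne_of_gt ht0), rpow_neg_two ht0]
  have hnt2 : ‖(t:ℂ)^2‖ = t^2 := by
    rw [norm_pow, Complex.norm_real, Real.norm_eq_abs, abs_of_pos ht0]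
  have hnt3 : ‖(t:ℂ)^3‖ = t^3 := by
    rw [norm_pow, Complex.norm_real, Real.norm_eq_abs, abs_of_pos ht0]
  have hrho : ‖((rho t : ℝ):ℂ)‖ ≤ 1 := by
    rw [Complex.norm_real, Real.norm_eq_abs, abs_of_nonneg (rho_nonneg t)]
    exact rho_le_one t
  have hexp1 : ‖Complex.exp (-Complex.I*h*t)‖ = 1 := by
    rw [Complex.norm_exp]; simp [Complex.mul_re]
  have hexp2 : ‖Complex.exp (Complex.I*s*t)‖ = 1 := by
    rw [Complex.norm_exp]; simp [Complex.mul_re]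
  have h1 : ‖-(Complex.I*h)*Complex.exp (-Complex.I*h*t)/(t:ℂ)^2‖ ≤ h/t^2 := by
    rw [norm_div, norm_mul, norm_neg, norm_mul, hexp1, hnt2]
    simp [abs_of_nonneg hh]
  have h2 : ‖Complex.I*h*Complex.exp (Complex.I*s*t)/(t:ℂ)^2‖ ≤ h/t^2 := by
    rw [norm_div, norm_mul, norm_mul, hexp2, hnt2]
    simp [abs_of_nonneg hh]
  have h3 : ‖2*(1-Complex.exp (-Complex.I*h*t))/(t:ℂ)^3‖ ≤ 4*h/t^2 := by
    rw [norm_div, norm_mul, hnt3]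
    have := norm_one_sub_exp hh ht0.le
    have h2n : ‖(2:ℂ)‖ = 2 := by norm_num
    rw [h2n]
    calc 2 * ‖1-Complex.exp (-Complex.I*h*t)‖ / t^3 ≤ 2 * (2*(h*t)) / t^3 := by
          gcongr
    _ = 4*h/t^2 := by field_simp; ring
  calc ‖_‖ ≤ 1 * ‖(-(Complex.I*h)*Complex.exp (-Complex.I*h*t)/(t:ℂ)^2
        - Complex.I*h*Complex.exp (Complex.I*s*t)/(t:ℂ)^2
        + 2*(1-Complex.exp (-Complex.I*h*t))/(t:ℂ)^3)‖ := by
        rw [norm_mul]; gcongr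
  _ ≤ 1 * (h/t^2 + h/t^2 + 4*h/t^2) := by
        rw [one_mul, one_mul]
        calc ‖_‖ ≤ ‖-(Complex.I*h)*Complex.exp (-Complex.I*h*t)/(t:ℂ)^2
            - Complex.I*h*Complex.exp (Complex.I*s*t)/(t:ℂ)^2‖
            + ‖2*(1-Complex.exp (-Complex.I*h*t))/(t:ℂ)^3‖ := norm_add_le _ _
        _ ≤ (‖-(Complex.I*h)*Complex.exp (-Complex.I*h*t)/(t:ℂ)^2‖
            + ‖Complex.I*h*Complex.exp (Complex.I*s*t)/(t:ℂ)^2‖)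
            + ‖2*(1-Complex.exp (-Complex.I*h*t))/(t:ℂ)^3‖ := by
              gcongr; exact norm_sub_le _ _
        _ ≤ h/t^2 + h/t^2 + 4*h/t^2 := by gcongr
  _ = (6*h) * (1/t^2) := by ring

noncomputable def gI (h t : ℝ) : ℂ := (rho t : ℂ) * (1 - Complex.exp (-Complex.I*h*t)) / (t:ℂ)^2
noncomputable def kR (h t : ℝ) : ℝ := rho t * Real.sin (h*t) / t^2

lemma norm_exp_neg (h t : ℝ) : ‖Complex.exp (-Complex.I*h*t)‖ = 1 := by
  rw [Complex.norm_exp]; simp [Complex.mul_re]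

lemma gI_meas (h : ℝ) : AEStronglyMeasurable (gI h) volume := by
  apply Measurable.aestronglyMeasurable
  apply Measurable.div
  · apply Measurable.mul
    · exact Complex.measurable_ofReal.comp rho_continuous.measurable
    · fun_prop
  · fun_prop

lemma norm_gI_le {h t : ℝ} (ht : 3 < t) : ‖gI h t‖ ≤ 2 * t^(-2:ℝ) := by
  have ht0 : (0:ℝ) < t := by linarith
  rw [gI, rpow_neg_two ht0, norm_div, norm_mul]
  have h1 : ‖((rho t:ℝ):ℂ)‖ ≤ 1 := by
    rw [Complex.norm_real, Real.norm_eq_abs, abs_of_nonneg (rho_nonneg t)]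
    exact rho_le_one t
  have h2 : ‖1 - Complex.exp (-Complex.I*h*t)‖ ≤ 2 := by
    calc ‖1 - Complex.exp (-Complex.I*h*t)‖ ≤ ‖(1:ℂ)‖ + ‖Complex.exp (-Complex.I*h*t)‖ :=
      norm_sub_le _ _
    _ = 2 := by rw [norm_exp_neg]; norm_num
  have h3 : ‖(t:ℂ)^2‖ = t^2 := by
    rw [norm_pow, Complex.norm_real, Real.norm_eq_abs, abs_of_pos ht0]
  rw [h3]
  have : ‖((rho t:ℝ):ℂ)‖ * ‖1 - Complex.exp (-Complex.I*h*t)‖ / t^2 ≤ 1 * 2 / t^2 := by gcongr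
  have e : 1 * 2 / t^2 = 2 * (1/t^2) := by ring
  linarith [this]

lemma gI_int (h : ℝ) : IntegrableOn (gI h) (Ioi 3) :=
  integrable_of_bound (gI_meas h) 2 (fun t ht => norm_gI_le ht)

lemma kR_meas (h : ℝ) : AEStronglyMeasurable (kR h) volume := by
  apply Measurable.aestronglyMeasurable
  apply Measurable.div
  · exact (rho_continuous.measurable).mul (by fun_prop)
  · fun_prop

lemma norm_kR_le {h t : ℝ} (ht : 3 < t) : ‖kR h t‖ ≤ 1 * t^(-2:ℝ) := by
  have ht0 : (0:ℝ) < t := by linarith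
  rw [kR, rpow_neg_two ht0, Real.norm_eq_abs, abs_div, abs_mul, one_mul]
  have h1 : |rho t| ≤ 1 := by rw [abs_of_nonneg (rho_nonneg t)]; exact rho_le_one t
  have h2 : |Real.sin (h*t)| ≤ 1 := Real.abs_sin_le_one _
  have h3 : |t^2| = t^2 := abs_of_pos (by positivity)
  rw [h3]
  calc |rho t| * |Real.sin (h*t)| / t^2 ≤ 1 * 1 / t^2 := by gcongr
  _ = 1/t^2 := by ring

lemma kR_int (h : ℝ) : IntegrableOn (kR h) (Ioi 3) :=
  integrable_of_bound_re (kR_meas h) 1 (fun t ht => norm_kR_le ht)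

lemma FFvd_meas (s u : ℝ) : AEStronglyMeasurable (fun t => FF s t * vd u t) volume :=
  ((FF_continuous s).measurable.mul (vd_measurable u)).aestronglyMeasurable

lemma FFvd_int_on {s u : ℝ} (hu : 0 ≤ u) : IntegrableOn (fun t => FF s t * vd u t) (Ioi 3) := by
  apply integrable_of_bound (FFvd_meas s u) (2*u+4)
  intro t ht
  have ht0 : (0:ℝ) < t := by linarith
  rw [norm_mul, rpow_neg_two ht0]
  have h5 : ‖FF s t‖ * ‖vd u t‖ ≤ 1 * ((2*u+4)/t^2) :=
    mul_le_mul ((norm_FF_le s t).trans (rho_le_one t)) (norm_vd_le hu ht.le)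
      (norm_nonneg _) zero_le_one
  have h6 : 1 * ((2*u+4)/t^2) = (2*u+4) * (1/t^2) := by ring
  linarith [h5]

lemma FFvd_zero {s u t : ℝ} (ht : t ∉ Ioi (3:ℝ)) : FF s t * vd u t = 0 := by
  simp only [mem_Ioi, not_lt] at ht
  rw [FF, rho_eq_zero ht]
  simp

lemma FFvd_int {s u : ℝ} (hu : 0 ≤ u) : Integrable (fun t => FF s t * vd u t) volume := by
  have : (fun t => FF s t * vd u t) = (Ioi (3:ℝ)).indicator (fun t => FF s t * vd u t) := by
    funext t
    by_cases ht : t ∈ Ioi (3:ℝ)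
    · rw [indicator_of_mem ht]
    · rw [indicator_of_notMem ht, FFvd_zero ht]
  rw [this, integrable_indicator_iff measurableSet_Ioi]
  exact FFvd_int_on hu

lemma Om_diff {s h : ℝ} (hs : 0 ≤ s) (hh : 0 ≤ h) :
    Om (FF s) (s+h) - Om (FF s) s
      = ∫ t in Ioi (3:ℝ), FF s t * (vd s t - vd (s+h) t) := by
  have h1 : Om (FF s) (s+h) - Om (FF s) s
      = ∫ t : ℝ, (FF s t * vd s t - FF s t * vd (s+h) t) := by
    rw [Om, Om, integral_sub (FFvd_int hs) (FFvd_int (by linarith))]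
    ring
  rw [h1]
  rw [← setIntegral_eq_integral_of_forall_compl_eq_zero
    (fun t ht => by rw [FFvd_zero ht, FFvd_zero ht, sub_zero])]
  apply setIntegral_congr_fun measurableSet_Ioi
  intro t _
  ring

lemma diff_close {s h : ℝ} (hs : 0 ≤ s) (hh : 0 ≤ h) :
    ‖(Om (FF s) (s+h) - Om (FF s) s) - Complex.I*s*(∫ t in Ioi (3:ℝ), gI h t)‖ ≤ 2*h := by
  rw [Om_diff hs hh]
  have hint1 : IntegrableOn (fun t => FF s t * (vd s t - vd (s+h) t)) (Ioi 3) := by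
    have : (fun t => FF s t * (vd s t - vd (s+h) t))
        = fun t => FF s t * vd s t - FF s t * vd (s+h) t := by funext t; ring
    rw [this]
    exact (FFvd_int_on hs).sub (FFvd_int_on (by linarith))
  have hIs : Complex.I*(s:ℂ)*(∫ t in Ioi (3:ℝ), gI h t)
      = ∫ t in Ioi (3:ℝ), Complex.I*(s:ℂ)*gI h t :=
    (integral_const_mul _ _).symm
  rw [hIs, ← integral_sub hint1 ((gI_int h).const_mul _)]
  have hb : ∫ t in Ioi (3:ℝ), (6*h) * t^(-2:ℝ) = 2*h := by
    rw [integral_const_mul, integral_rpow_neg_two (by norm_num : (0:ℝ) < 3)]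
    ring
  rw [← hb]
  apply norm_integral_le_of_norm_le ((integrableOn_rpow_neg_two (by norm_num)).const_mul (6*h))
  rw [ae_restrict_iff' measurableSet_Ioi]
  apply ae_of_all
  intro t ht
  exact key_pointwise hs hh ht

lemma J_im (h : ℝ) : (∫ t in Ioi (3:ℝ), gI h t).im = ∫ t in Ioi (3:ℝ), kR h t := by
  have h1 : (∫ t in Ioi (3:ℝ), gI h t).im = ∫ t in Ioi (3:ℝ), (gI h t).im :=
    (integral_im (gI_int h)).symm
  rw [h1]
  apply setIntegral_congr_fun measurableSet_Ioi
  intro t ht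
  exact im_g (by simp at ht; linarith)

lemma K_lower {h : ℝ} (h0 : 0 < h) (h8 : h < 1/8) :
    (3/4)*h*(Real.log h⁻¹)^(-(1/4:ℝ))*(Real.log h⁻¹ - Real.log 4) - h/3
      ≤ ∫ t in Ioi (3:ℝ), kR h t := by
  have hinv0 : 0 < h⁻¹ := by positivity
  have h8' : (8:ℝ) < h⁻¹ := by
    have : ((1:ℝ)/8)⁻¹ < h⁻¹ := by
      apply inv_strictAnti₀ h0 h8
    norm_num at this
    exact this
  set c : ℝ := 3*h⁻¹ with hc
  have hc3 : (3:ℝ) < c := by rw [hc]; nlinarith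
  have hc0 : (0:ℝ) < c := by linarith
  have hsplit : ∫ t in Ioi (3:ℝ), kR h t
      = (∫ t in Ioc (3:ℝ) c, kR h t) + ∫ t in Ioi c, kR h t := by
    rw [← setIntegral_union (Ioc_disjoint_Ioi le_rfl) measurableSet_Ioi
      ((kR_int h).mono_set Ioc_subset_Ioi_self)
      ((kR_int h).mono_set (Ioi_subset_Ioi hc3.le)), Ioc_union_Ioi_eq_Ioi hc3.le]
  -- tail bound
  have htail : |∫ t in Ioi c, kR h t| ≤ h/3 := by
    have hb : ∫ t in Ioi c, 1 * t^(-2:ℝ) = h/3 := by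
      rw [integral_const_mul, integral_rpow_neg_two hc0, hc]
      rw [mul_inv, inv_inv]
      ring
    rw [← Real.norm_eq_abs, ← hb]
    apply norm_integral_le_of_norm_le ((integrableOn_rpow_neg_two hc0).const_mul 1)
    rw [ae_restrict_iff' measurableSet_Ioi]
    apply ae_of_all
    intro t ht
    simp only [mem_Ioi] at ht
    exact norm_kR_le (by linarith)
  -- nonnegativity on Ioc 3 c
  have hnn : ∀ t ∈ Ioc (3:ℝ) c, 0 ≤ kR h t := by
    intro t ht
    obtain ⟨ht3, htc⟩ := ht
    have ht0 : (0:ℝ) < t := by linarith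
    apply div_nonneg (mul_nonneg (rho_nonneg t) ?_) (sq_nonneg t)
    apply Real.sin_nonneg_of_nonneg_of_le_pi (by positivity)
    have : h*t ≤ h*c := by nlinarith
    have h3pi : (3:ℝ) ≤ Real.pi := by linarith [Real.pi_gt_three]
    calc h*t ≤ h*(3*h⁻¹) := by rw [← hc]; exact this
    _ = 3 := by field_simp
    _ ≤ Real.pi := h3pi
  -- main region
  have h4inv : (4:ℝ) < h⁻¹ := by linarith
  have hmono : (∫ t in Ioc (4:ℝ) h⁻¹, kR h t) ≤ ∫ t in Ioc (3:ℝ) c, kR h t := by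
    apply setIntegral_mono_set ((kR_int h).mono_set Ioc_subset_Ioi_self)
    · have hae : ∀ᵐ t ∂(volume.restrict (Ioc (3:ℝ) c)), 0 ≤ kR h t :=
        (ae_restrict_iff' measurableSet_Ioc).2 (ae_of_all _ hnn)
      exact hae
    · apply HasSubset.Subset.eventuallyLE
      apply Ioc_subset_Ioc (by norm_num)
      rw [hc]; nlinarith
  set L : ℝ := Real.log h⁻¹ with hL
  have hpt : ∀ t ∈ Ioc (4:ℝ) h⁻¹, (3/4)*h*L^(-(1/4:ℝ)) * (1/t) ≤ kR h t := by
    intro t ht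
    obtain ⟨ht4, hth⟩ := ht
    have ht0 : (0:ℝ) < t := by linarith
    have hlog1 : 1 ≤ Real.log t := one_le_log_of_4le ht4.le
    have hlogle : Real.log t ≤ L := Real.log_le_log ht0 hth
    have hrho : L^(-(1/4:ℝ)) ≤ rho t := by
      rw [rho_eq_of_4le ht4.le]
      exact Real.rpow_le_rpow_of_nonpos (by linarith) hlogle (by norm_num)
    have hx0 : 0 < h*t := by positivity
    have hx1 : h*t ≤ 1 := by
      calc h*t ≤ h*h⁻¹ := by nlinarith
      _ = 1 := by field_simp
    have hsin : (3/4)*(h*t) ≤ Real.sin (h*t) := by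
      have h1 := Real.sin_gt_sub_cube hx0
      have hx2 : (h*t)^2 ≤ 1 := by nlinarith
      have hx3 : (h*t)^3 ≤ h*t := by nlinarith
      linarith
    have hmul : L^(-(1/4:ℝ)) * ((3/4)*(h*t)) ≤ rho t * Real.sin (h*t) := by
      apply mul_le_mul hrho hsin (by positivity) (rho_nonneg t)
    have heq : (3/4)*h*L^(-(1/4:ℝ)) * (1/t) = (L^(-(1/4:ℝ)) * ((3/4)*(h*t)))/t^2 := by
      field_simp
    rw [heq, kR]
    apply div_le_div_of_nonneg_right ?_ (by positivity)
    · exact hmul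
  have hint_lhs : IntegrableOn (fun t => (3/4)*h*L^(-(1/4:ℝ)) * (1/t)) (Ioc (4:ℝ) h⁻¹) := by
    rw [← intervalIntegrable_iff_integrableOn_Ioc_of_le h4inv.le]
    apply IntervalIntegrable.const_mul
    apply intervalIntegral.intervalIntegrable_one_div
    · intro x hx
      rw [Set.uIcc_of_le h4inv.le] at hx
      have := hx.1
      intro h'
      rw [h'] at this
      norm_num at this
    · exact continuousOn_id
  have hmain : (3/4)*h*L^(-(1/4:ℝ)) * (L - Real.log 4) ≤ ∫ t in Ioc (4:ℝ) h⁻¹, kR h t := by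
    have heval : ∫ t in Ioc (4:ℝ) h⁻¹, (3/4)*h*L^(-(1/4:ℝ)) * (1/t)
        = (3/4)*h*L^(-(1/4:ℝ)) * (L - Real.log 4) := by
      rw [← intervalIntegral.integral_of_le h4inv.le]
      rw [intervalIntegral.integral_const_mul]
      rw [integral_one_div (by
        intro hx
        rw [Set.uIcc_of_le h4inv.le] at hx
        have := hx.1
        norm_num at this)]
      rw [Real.log_div (ne_of_gt hinv0) (by norm_num)]
    rw [← heval]
    exact setIntegral_mono_on hint_lhs ((kR_int h).mono_set
      (Ioc_subset_Ioi_self.trans (Ioi_subset_Ioi (by norm_num)))) measurableSet_Ioc hpt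
  have h1 : -(h/3) ≤ ∫ t in Ioi c, kR h t := by
    have := abs_le.1 htail
    linarith [this.1]
  rw [hsplit]
  linarith

lemma norm_Is_mul {s : ℝ} (hs : 0 ≤ s) (J : ℂ) : ‖Complex.I*(s:ℂ)*J‖ = s * ‖J‖ := by
  rw [norm_mul, norm_mul, Complex.norm_I, one_mul, Complex.norm_real, Real.norm_eq_abs,
    abs_of_nonneg hs]

lemma main_est {s h : ℝ} (hs : 0 < s) (h0 : 0 < h) (h8 : h < 1/8) :
    s*((3/4)*h*(Real.log h⁻¹)^(-(1/4:ℝ))*(Real.log h⁻¹ - Real.log 4) - h/3) - 2*h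
      ≤ ‖Om (FF s) (s+h) - Om (FF s) s‖ := by
  set J := ∫ t in Ioi (3:ℝ), gI h t with hJ
  have h1 : ‖Complex.I*(s:ℂ)*J‖ - ‖Om (FF s) (s+h) - Om (FF s) s‖
      ≤ ‖(Om (FF s) (s+h) - Om (FF s) s) - Complex.I*(s:ℂ)*J‖ := by
    rw [norm_sub_rev (Om (FF s) (s+h) - Om (FF s) s)]
    exact norm_sub_norm_le _ _
  have h2 := diff_close hs.le h0.le
  have h3 : ‖Complex.I*(s:ℂ)*J‖ = s * ‖J‖ := norm_Is_mul hs.le J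
  have h4 : J.im ≤ ‖J‖ := by
    calc J.im ≤ |J.im| := le_abs_self _
    _ ≤ ‖J‖ := Complex.abs_im_le_norm J
  have h5 : (3/4)*h*(Real.log h⁻¹)^(-(1/4:ℝ))*(Real.log h⁻¹ - Real.log 4) - h/3 ≤ J.im := by
    rw [hJ, J_im h]
    exact K_lower h0 h8
  have h6 : s * ((3/4)*h*(Real.log h⁻¹)^(-(1/4:ℝ))*(Real.log h⁻¹ - Real.log 4) - h/3)
      ≤ s * ‖J‖ := by
    apply mul_le_mul_of_nonneg_left (h5.trans h4) hs.le
  linarith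

lemma log4_le : Real.log 4 ≤ 1.4 := by
  have h2 : Real.log 4 = 2 * Real.log 2 := by
    rw [show (4:ℝ) = 2^(2:ℕ) by norm_num, Real.log_pow]
    push_cast; ring
  have := Real.log_two_lt_d9
  rw [h2]; linarith

lemma abs_log_eq {h : ℝ} (h0 : 0 < h) (h1 : h < 1) : |Real.log h| = Real.log h⁻¹ := by
  rw [Real.log_inv, abs_of_neg (Real.log_neg h0 h1)]

lemma inv4 {h : ℝ} (h0 : 0 < h) (h8 : h < 1/8) : (4:ℝ) ≤ h⁻¹ := by
  have : ((1:ℝ)/8)⁻¹ < h⁻¹ := inv_strictAnti₀ h0 h8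
  norm_num at this; linarith

lemma ratio_lower {s h : ℝ} (hs : 0 < s) (h0 : 0 < h) (h8 : h < 1/8) :
    ((3*s/4) * (Real.log h⁻¹)^((1:ℝ)/4) - (2*s+2)) * (h * |Real.log h| ^ ((1:ℝ)/2))
      ≤ ‖Om (FF s) (s+h) - Om (FF s) s‖ := by
  set L : ℝ := Real.log h⁻¹ with hLdef
  have habs : |Real.log h| = L := abs_log_eq h0 (by linarith)
  have hinv4 : (4:ℝ) ≤ h⁻¹ := by
    have : ((1:ℝ)/8)⁻¹ < h⁻¹ := inv_strictAnti₀ h0 h8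
    norm_num at this; linarith
  have hL1 : 1 ≤ L := one_le_log_of_4le hinv4
  have hL0 : 0 < L := by linarith
  have a1 : L^(-(1/4:ℝ)) * L = L^((3:ℝ)/4) := by
    nth_rewrite 2 [show L = L^(1:ℝ) from (Real.rpow_one L).symm]
    rw [← Real.rpow_add hL0]; norm_num
  have a2 : L^((1:ℝ)/4) * L^((1:ℝ)/2) = L^((3:ℝ)/4) := by
    rw [← Real.rpow_add hL0]; norm_num
  have a3 : 1 ≤ L^((1:ℝ)/2) := by
    calc (1:ℝ) = 1^((1:ℝ)/2) := (Real.one_rpow _).symm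
    _ ≤ L^((1:ℝ)/2) := Real.rpow_le_rpow zero_le_one hL1 (by norm_num)
  have a4 : L^(-(1/4:ℝ)) ≤ 1 := Real.rpow_le_one_of_one_le_of_nonpos hL1 (by norm_num)
  have a6 : 0 ≤ L^(-(1/4:ℝ)) := Real.rpow_nonneg hL0.le _
  have a5 := log4_le
  have a7 : (0:ℝ) ≤ Real.log 4 := Real.log_nonneg (by norm_num)
  rw [habs]
  have key : ((3*s/4) * L^((1:ℝ)/4) - (2*s+2)) * (h * L^((1:ℝ)/2))
      ≤ s*((3/4)*h*L^(-(1/4:ℝ))*(L - Real.log 4) - h/3) - 2*h := by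
    have e1 : ((3*s/4) * L^((1:ℝ)/4) - (2*s+2)) * (h * L^((1:ℝ)/2))
        = (3*s/4)*h*(L^((1:ℝ)/4) * L^((1:ℝ)/2)) - (2*s+2)*h*L^((1:ℝ)/2) := by ring
    have e2 : s*((3/4)*h*L^(-(1/4:ℝ))*(L - Real.log 4) - h/3) - 2*h
        = (3*s/4)*h*(L^(-(1/4:ℝ)) * L) - (3/4)*s*h*(L^(-(1/4:ℝ))*Real.log 4) - s*h/3 - 2*h := by
      ring
    rw [e1, e2, a1, a2]
    have k1 : (2*s+2)*h ≤ (2*s+2)*h*L^((1:ℝ)/2) := by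
      nlinarith [mul_nonneg (show (0:ℝ) ≤ (2*s+2)*h by positivity) (sub_nonneg.2 a3)]
    have k2 : L^(-(1/4:ℝ))*Real.log 4 ≤ 1.4 := by
      calc L^(-(1/4:ℝ))*Real.log 4 ≤ 1*Real.log 4 := mul_le_mul_of_nonneg_right a4 a7
      _ ≤ 1.4 := by linarith
    have k3 : (3/4)*s*h*(L^(-(1/4:ℝ))*Real.log 4) ≤ (3/4)*s*h*1.4 := by
      apply mul_le_mul_of_nonneg_left k2 (by positivity)
    nlinarith [mul_pos hs h0, k1, k3]
  calc ((3*s/4) * L^((1:ℝ)/4) - (2*s+2)) * (h * L^((1:ℝ)/2))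
      ≤ s*((3/4)*h*L^(-(1/4:ℝ))*(L - Real.log 4) - h/3) - 2*h := key
  _ ≤ ‖Om (FF s) (s+h) - Om (FF s) s‖ := main_est hs h0 h8

lemma freq_blowup {s : ℝ} (hs : 0 < s) (M : ℝ) :
    ∃ᶠ h in 𝓝[>] (0:ℝ),
      M < ‖Om (FF s) (s+h) - Om (FF s) s‖ / (h * |Real.log h| ^ ((1:ℝ)/2)) := by
  have t1 : Tendsto (fun h : ℝ => Real.log h⁻¹) (𝓝[>] (0:ℝ)) atTop := by
    have := Real.tendsto_log_nhdsGT_zero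
    have h2 : Tendsto (fun h : ℝ => -Real.log h) (𝓝[>] (0:ℝ)) atTop :=
      tendsto_neg_atBot_atTop.comp this
    apply h2.congr
    intro x
    rw [Real.log_inv]
  have t2 : Tendsto (fun h : ℝ => (3*s/4) * (Real.log h⁻¹)^((1:ℝ)/4) - (2*s+2))
      (𝓝[>] (0:ℝ)) atTop := by
    apply tendsto_atTop_add_const_right
    apply Tendsto.const_mul_atTop (by positivity : (0:ℝ) < 3*s/4)
    exact (tendsto_rpow_atTop (by norm_num)).comp t1
  have hev : ∀ᶠ h in 𝓝[>] (0:ℝ), M < (3*s/4) * (Real.log h⁻¹)^((1:ℝ)/4) - (2*s+2) :=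
    t2.eventually (eventually_gt_atTop M)
  have hmem : Ioo (0:ℝ) (1/8) ∈ 𝓝[>] (0:ℝ) := Ioo_mem_nhdsGT_of_mem ⟨le_refl 0, by norm_num⟩
  have hev2 : ∀ᶠ h in 𝓝[>] (0:ℝ), h ∈ Ioo (0:ℝ) (1/8) := eventually_of_mem hmem (fun _ h => h)
  apply ((hev.and hev2).frequently).mono
  rintro h ⟨hM, h0, h8⟩
  have hL1 : 1 ≤ Real.log h⁻¹ := one_le_log_of_4le (inv4 h0 h8)
  have habs : |Real.log h| = Real.log h⁻¹ := abs_log_eq h0 (by linarith)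
  have hY : 1 ≤ |Real.log h| ^ ((1:ℝ)/2) := by
    rw [habs]
    calc (1:ℝ) = 1^((1:ℝ)/2) := (Real.one_rpow _).symm
    _ ≤ (Real.log h⁻¹)^((1:ℝ)/2) := Real.rpow_le_rpow zero_le_one hL1 (by norm_num)
  have hpos : 0 < h * |Real.log h| ^ ((1:ℝ)/2) := mul_pos h0 (lt_of_lt_of_le one_pos hY)
  rw [lt_div_iff₀ hpos]
  calc M * (h * |Real.log h| ^ ((1:ℝ)/2))
      < ((3*s/4) * (Real.log h⁻¹)^((1:ℝ)/4) - (2*s+2)) * (h * |Real.log h| ^ ((1:ℝ)/2)) :=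
        mul_lt_mul_of_pos_right hM hpos
  _ ≤ ‖Om (FF s) (s+h) - Om (FF s) s‖ := ratio_lower hs h0 h8


theorem stmt6 :
    (∀ s : ℝ, 0 < s → ∃ F : ℝ → ℂ, BcR F ∧
      ∀ M : ℝ, ∃ᶠ h in 𝓝[>] (0:ℝ),
        M < ‖Om F (s+h) - Om F s‖ / (h * |Real.log h| ^ ((1:ℝ)/2))) ∧
    ∃ F : ℝ → ℂ, BcR F ∧ ¬ ∃ K : NNReal, LipschitzWith K (Om F) := by
  constructor
  · intro s hs
    exact ⟨FF s, BcR_FF s, fun M => freq_blowup hs M⟩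
  · refine ⟨FF 1, BcR_FF 1, ?_⟩
    rintro ⟨K, hK⟩
    have hfreq := freq_blowup one_pos (K:ℝ)
    have hmem : Ioo (0:ℝ) (1/8) ∈ 𝓝[>] (0:ℝ) := Ioo_mem_nhdsGT_of_mem ⟨le_refl 0, by norm_num⟩
    have hev2 : ∀ᶠ h in 𝓝[>] (0:ℝ), h ∈ Ioo (0:ℝ) (1/8) :=
      eventually_of_mem hmem (fun _ h => h)
    obtain ⟨h, hlt, h0, h8⟩ := (hfreq.and_eventually hev2).exists
    have hL1 : 1 ≤ Real.log h⁻¹ := one_le_log_of_4le (inv4 h0 h8)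
    have habs : |Real.log h| = Real.log h⁻¹ := abs_log_eq h0 (by linarith)
    have hY : 1 ≤ |Real.log h| ^ ((1:ℝ)/2) := by
      rw [habs]
      calc (1:ℝ) = 1^((1:ℝ)/2) := (Real.one_rpow _).symm
      _ ≤ (Real.log h⁻¹)^((1:ℝ)/2) := Real.rpow_le_rpow zero_le_one hL1 (by norm_num)
    have hpos : 0 < h * |Real.log h| ^ ((1:ℝ)/2) := mul_pos h0 (lt_of_lt_of_le one_pos hY)
    have hd : ‖Om (FF 1) (1+h) - Om (FF 1) 1‖ ≤ (K:ℝ) * h := by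
      have h1 := hK.dist_le_mul (1+h) 1
      rw [Complex.dist_eq, Real.dist_eq] at h1
      have h2 : |1 + h - 1| = h := by rw [show (1+h-1 : ℝ) = h by ring, abs_of_pos h0]
      rw [h2] at h1
      exact h1
    have hle : ‖Om (FF 1) (1+h) - Om (FF 1) 1‖ / (h * |Real.log h| ^ ((1:ℝ)/2)) ≤ (K:ℝ) := by
      rw [div_le_iff₀ hpos]
      calc ‖Om (FF 1) (1+h) - Om (FF 1) 1‖ ≤ (K:ℝ)*h := hd
      _ = (K:ℝ)*h*1 := by ring
      _ ≤ (K:ℝ)*h*(|Real.log h| ^ ((1:ℝ)/2)) := by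
          apply mul_le_mul_of_nonneg_left hY (by positivity)
      _ = (K:ℝ) * (h * |Real.log h| ^ ((1:ℝ)/2)) := by ring
    exact absurd hlt (not_lt.2 hle)
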